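/- Let H be a numerical semigroup (a cofinite submonoid of ℕ containing 0) and let q ≥ 4 be an integer. Suppose the three smallest positive elements m₁ < m₂ < m₃ of H satisfy m₂ = q and m₃ = q+1, and 2m₁ ≥ q. Then the interval [m₁, 2(q+1)] contains at least 8 elements of H. -/
import Mathlib


/-- Let `H ⊆ ℕ` be a numerical semigroup (an additive submonoid of ℕ with finite
complement) whose three smallest positive elements are `m₁ < m₂ < m₃` with
`m₂ = q`, `m₃ = q+1`, `2m₁ ≥ q`, `q ≥ 4`. Then `H ∩ [m₁, 2(q+1)]` has at least
8 elements. -/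
theorem stmt6 (q m₁ m₂ m₃ : ℕ) (hq : 4 ≤ q) (H : AddSubmonoid ℕ)
    (hcofin : (Set.univ \ (H : Set ℕ)).Finite)
    (hm₁ : m₁ ∈ H) (hm₂ : m₂ ∈ H) (hm₃ : m₃ ∈ H)
    (h₁₂ : m₁ < m₂) (h₂₃ : m₂ < m₃)
    (hmin : ∀ x ∈ H, 0 < x → x < m₃ → x = m₁ ∨ x = m₂)
    (h₁pos : 0 < m₁) (hm₂q : m₂ = q) (hm₃q : m₃ = q + 1) (h2m₁ : 2 * m₁ ≥ q) :
    8 ≤ ((H : Set ℕ) ∩ Set.Icc m₁ (2 * (q + 1))).ncard := by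
  subst hm₂q hm₃q
  have hm₁2 : 2 ≤ m₁ := by omega
  have h2m : 2 * m₁ ∈ H := by rw [two_mul]; exact add_mem hm₁ hm₁
  have hmq : m₁ + m₂ ∈ H := add_mem hm₁ hm₂
  have hmq1 : m₁ + m₂ + 1 ∈ H := by rw [add_assoc]; exact add_mem hm₁ hm₃
  have h2q : 2 * m₂ ∈ H := by rw [two_mul]; exact add_mem hm₂ hm₂
  have h2q1 : 2 * m₂ + 1 ∈ H := by rw [two_mul, add_assoc]; exact add_mem hm₂ hm₃
  have h2q2 : 2 * m₂ + 2 ∈ H := by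
    have h := add_mem hm₃ hm₃
    have : 2 * m₂ + 2 = m₂ + 1 + (m₂ + 1) := by ring
    rw [this]; exact h
  have hTfin : ((H : Set ℕ) ∩ Set.Icc m₁ (2 * (m₂ + 1))).Finite :=
    (Set.finite_Icc m₁ (2*(m₂+1))).subset Set.inter_subset_right
  by_cases hcase : m₁ + 2 ≤ m₂
  · have hsub : ↑({m₁, m₂, m₂+1, m₁+m₂, m₁+m₂+1, 2*m₂, 2*m₂+1, 2*m₂+2} : Finset ℕ)
        ⊆ ((H : Set ℕ) ∩ Set.Icc m₁ (2 * (m₂ + 1))) := by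
      intro x hx
      simp only [Finset.coe_insert, Set.mem_insert_iff, Finset.coe_singleton,
        Set.mem_singleton_iff] at hx
      rcases hx with rfl|rfl|rfl|rfl|rfl|rfl|rfl|rfl <;>
        exact ⟨by assumption, by constructor <;> omega⟩
    have hcard : ({m₁, m₂, m₂+1, m₁+m₂, m₁+m₂+1, 2*m₂, 2*m₂+1, 2*m₂+2} : Finset ℕ).card = 8 := by
      repeat rw [Finset.card_insert_of_notMem (by simp; omega)]
      simp
    calc (8:ℕ) = ({m₁, m₂, m₂+1, m₁+m₂, m₁+m₂+1, 2*m₂, 2*m₂+1, 2*m₂+2} : Finset ℕ).card := hcard.symm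
      _ = (↑({m₁, m₂, m₂+1, m₁+m₂, m₁+m₂+1, 2*m₂, 2*m₂+1, 2*m₂+2} : Finset ℕ) : Set ℕ).ncard :=
        (Set.ncard_coe_finset _).symm
      _ ≤ _ := Set.ncard_le_ncard hsub hTfin
  · have hsub : ↑({m₁, m₂, m₂+1, 2*m₁, m₁+m₂, 2*m₂, 2*m₂+1, 2*m₂+2} : Finset ℕ)
        ⊆ ((H : Set ℕ) ∩ Set.Icc m₁ (2 * (m₂ + 1))) := by
      intro x hx
      simp only [Finset.coe_insert, Set.mem_insert_iff, Finset.coe_singleton,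
        Set.mem_singleton_iff] at hx
      rcases hx with rfl|rfl|rfl|rfl|rfl|rfl|rfl|rfl <;>
        exact ⟨by assumption, by constructor <;> omega⟩
    have hcard : ({m₁, m₂, m₂+1, 2*m₁, m₁+m₂, 2*m₂, 2*m₂+1, 2*m₂+2} : Finset ℕ).card = 8 := by
      repeat rw [Finset.card_insert_of_notMem (by simp; omega)]
      simp
    calc (8:ℕ) = ({m₁, m₂, m₂+1, 2*m₁, m₁+m₂, 2*m₂, 2*m₂+1, 2*m₂+2} : Finset ℕ).card := hcard.symm
      _ = (↑({m₁, m₂, m₂+1, 2*m₁, m₁+m₂, 2*m₂, 2*m₂+1, 2*m₂+2} : Finset ℕ) : Set ℕ).ncard :=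
        (Set.ncard_coe_finset _).symm
      _ ≤ _ := Set.ncard_le_ncard hsub hTfin
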